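/- Two generalized finite automata (GFAs) G₁ and G₂ with n₁ and n₂ states respectively are equivalent (assign the same value to every word) if and only if they assign the same value to every word of length at most n₁ + n₂ − 1. -/

import Mathlib

open Matrix

lemma key_stab {α : Type} {M : Type} [AddCommGroup M] [Module ℝ M] [FiniteDimensional ℝ M]
    (v : List α → M) (T : α → M →ₗ[ℝ] M)
    (hv : ∀ w σ, v (w ++ [σ]) = T σ (v w))
    (φ : M →ₗ[ℝ] ℝ)
    (h : ∀ w : List α, w.length ≤ Module.finrank ℝ M - 1 → φ (v w) = 0) :
    ∀ w, φ (v w) = 0 := by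
  classical
  set n := Module.finrank ℝ M with hn
  set V : ℕ → Submodule ℝ M := fun ℓ => Submodule.span ℝ {x | ∃ w : List α, w.length ≤ ℓ ∧ v w = x} with hV
  have hmem : ∀ (w : List α) ℓ, w.length ≤ ℓ → v w ∈ V ℓ := by
    intro w ℓ hw
    exact Submodule.subset_span ⟨w, hw, rfl⟩
  have hmono : Monotone V := by
    intro a b hab
    apply Submodule.span_mono
    rintro x ⟨w, hw, rfl⟩
    exact ⟨w, hw.trans hab, rfl⟩
  have hmap : ∀ σ ℓ, (V ℓ).map (T σ) ≤ V (ℓ + 1) := by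
    intro σ ℓ
    rw [hV, Submodule.map_span]
    apply Submodule.span_mono
    rintro x ⟨y, ⟨w, hw, rfl⟩, rfl⟩
    exact ⟨w ++ [σ], by simpa using Nat.succ_le_succ hw, by rw [hv w σ]⟩
  -- step lemma
  have step : ∀ k, V (k + 1) ≤ V k → V (k + 2) ≤ V (k + 1) := by
    intro k hk
    rw [hV, Submodule.span_le]
    rintro x ⟨w, hw, rfl⟩
    rcases List.eq_nil_or_concat w with rfl | ⟨u, σ, rfl⟩
    · exact hmem [] (k + 1) (Nat.zero_le _)
    · rw [List.concat_eq_append] at hw ⊢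
      have hu : u.length ≤ k + 1 := by simpa using hw
      have h1 : v u ∈ V k := hk (hmem u (k + 1) hu)
      have := hmap σ k ⟨v u, h1, rfl⟩
      rw [← hv u σ] at this
      exact this
  have hstep : ∀ k, V (k + 1) ≤ V k → ∀ i, V (k + i + 1) ≤ V (k + i) := by
    intro k hk i
    induction i with
    | zero => simpa using hk
    | succ i ih2 =>
      have := step (k + i) ih2
      have e1 : k + (i + 1) + 1 = k + i + 2 := by omega
      have e2 : k + (i + 1) = k + i + 1 := by omega
      rw [e1, e2]
      exact this
  have stable : ∀ k, V (k + 1) ≤ V k → ∀ j, V (k + j) ≤ V k := by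
    intro k hk j
    induction j with
    | zero => exact le_rfl
    | succ j ih =>
      calc V (k + (j + 1)) = V (k + j + 1) := by rw [Nat.add_assoc]
        _ ≤ V (k + j) := hstep k hk j
        _ ≤ V k := ih
  -- existence of stabilization point
  have exk : ∃ k ≤ n - 1, V (k + 1) ≤ V k := by
    by_cases h0 : V 0 = ⊥
    · refine ⟨0, Nat.zero_le _, ?_⟩
      rw [hV, Submodule.span_le]
      rintro x ⟨w, hw, rfl⟩
      rcases List.eq_nil_or_concat w with rfl | ⟨u, σ, rfl⟩
      · exact hmem [] 0 le_rfl
      · rw [List.concat_eq_append] at hw ⊢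
        have hu : u.length = 0 := by simpa using hw
        have hvu : v u ∈ V 0 := hmem u 0 (by omega)
        rw [h0, Submodule.mem_bot] at hvu
        have : v (u ++ [σ]) = 0 := by rw [hv u σ, hvu, map_zero]
        rw [this]
        exact Submodule.zero_mem _
    · by_contra hcon
      push_neg at hcon
      have hstrict : ∀ k ≤ n - 1, V k < V (k + 1) := by
        intro k hk
        exact lt_of_le_not_ge (hmono (Nat.le_succ k)) (hcon k hk)
      have hrank : ∀ k ≤ n, k + 1 ≤ Module.finrank ℝ (V k) := by
        intro k hk
        induction k with
        | zero =>
          simpa using Submodule.one_le_finrank_iff.mpr h0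
        | succ k ih =>
          have h1 : k ≤ n - 1 := by
            rcases Nat.eq_zero_or_pos n with hn0 | hpos
            · exfalso
              apply h0
              have hsub : Subsingleton M := by
                have : Module.finrank ℝ M = 0 := by omega
                exact Module.finrank_zero_iff.mp this
              rw [eq_bot_iff]
              intro x _
              have hx : x = 0 := Subsingleton.elim x 0
              simp [hx]
            · omega
          have h2 := Submodule.finrank_lt_finrank_of_lt (hstrict k h1)
          have := ih (by omega)
          omega
      have h1 := hrank n le_rfl
      have h2 : Module.finrank ℝ (V n) ≤ n := Submodule.finrank_le _
      omega
  obtain ⟨k, hk, hVk⟩ := exk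
  intro w
  have hw : v w ∈ V k := by
    rcases le_or_gt w.length k with hle | hlt
    · exact hmem w k hle
    · have : v w ∈ V (k + (w.length - k)) := hmem w _ (by omega)
      exact stable k hVk _ this
  have hker : V k ≤ LinearMap.ker φ := by
    rw [hV, Submodule.span_le]
    rintro x ⟨u, hu, rfl⟩
    exact h u (by omega)
  simpa using hker hw

/-- The value assigned by a generalized finite automaton (GFA) with `n` states,
initial vector `init`, transition matrices `A`, and final vector `f`, to the
word `w = w₁…w_k`: it is `fᵀ A_{w_k} ⋯ A_{w_1} init`. -/
def GFA.value {α : Type} (n : ℕ) (init : Fin n → ℝ)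
    (A : α → Matrix (Fin n) (Fin n) ℝ) (f : Fin n → ℝ) (w : List α) : ℝ :=
  f ⬝ᵥ ((w.map A).reverse.prod).mulVec init

theorem stmt_16 {α : Type} (n₁ n₂ : ℕ)
    (init₁ : Fin n₁ → ℝ) (A₁ : α → Matrix (Fin n₁) (Fin n₁) ℝ) (f₁ : Fin n₁ → ℝ)
    (init₂ : Fin n₂ → ℝ) (A₂ : α → Matrix (Fin n₂) (Fin n₂) ℝ) (f₂ : Fin n₂ → ℝ) :
    (∀ w : List α, GFA.value n₁ init₁ A₁ f₁ w = GFA.value n₂ init₂ A₂ f₂ w) ↔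
    (∀ w : List α, w.length ≤ n₁ + n₂ - 1 →
      GFA.value n₁ init₁ A₁ f₁ w = GFA.value n₂ init₂ A₂ f₂ w) := by
  constructor
  · exact fun h w _ => h w
  · intro h w
    let T : α → ((Fin n₁ → ℝ) × (Fin n₂ → ℝ)) →ₗ[ℝ] ((Fin n₁ → ℝ) × (Fin n₂ → ℝ)) :=
      fun σ => LinearMap.prodMap (A₁ σ).mulVecLin (A₂ σ).mulVecLin
    let v : List α → (Fin n₁ → ℝ) × (Fin n₂ → ℝ) := fun u =>
      (((u.map A₁).reverse.prod).mulVec init₁, ((u.map A₂).reverse.prod).mulVec init₂)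
    let φ : ((Fin n₁ → ℝ) × (Fin n₂ → ℝ)) →ₗ[ℝ] ℝ :=
      { toFun := fun x => f₁ ⬝ᵥ x.1 - f₂ ⬝ᵥ x.2,
        map_add' := by
          rintro ⟨x1, x2⟩ ⟨y1, y2⟩
          simp only [Prod.mk_add_mk, dotProduct_add]
          ring
        map_smul' := by
          rintro c ⟨x1, x2⟩
          simp only [Prod.smul_mk, dotProduct_smul, smul_eq_mul, RingHom.id_apply]
          ring }
    have hv : ∀ (u : List α) σ, v (u ++ [σ]) = T σ (v u) := by
      intro u σ
      simp [v, T, LinearMap.prodMap_apply, Matrix.mulVecLin_apply, Matrix.mulVec_mulVec]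
    have hrank : Module.finrank ℝ ((Fin n₁ → ℝ) × (Fin n₂ → ℝ)) = n₁ + n₂ := by
      rw [Module.finrank_prod, Module.finrank_fin_fun, Module.finrank_fin_fun]
    have hval : ∀ u : List α,
        φ (v u) = GFA.value n₁ init₁ A₁ f₁ u - GFA.value n₂ init₂ A₂ f₂ u := by
      intro u; rfl
    have hB : ∀ u : List α,
        u.length ≤ Module.finrank ℝ ((Fin n₁ → ℝ) × (Fin n₂ → ℝ)) - 1 → φ (v u) = 0 := by
      intro u hu
      rw [hval]
      rw [hrank] at hu
      exact sub_eq_zero.mpr (h u hu)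
    have := key_stab v T hv φ hB w
    rw [hval] at this
    exact sub_eq_zero.mp this
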